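/- Let n be odd and Y a random t×n binary matrix with iid uniform entries. Let f(Y) be the indicator that every column of Y avoids p consecutive zeros, and g(Y) the indicator that every row of Y has strictly more ones than zeros. Then E[f(Y)g(Y)] >= F_p(t+1)^n / 2^{tn+t}. -/

import Mathlib

open List Finset

/-- The `q`-bonacci numbers: `F_q(0)=1`, `F_q(t)=2^(t-1)` for `1 ≤ t ≤ q`,
and `F_q(t)` is the sum of the previous `q` terms for `t > q`. -/
def qbonacci (q : ℕ) : ℕ → ℕ
  | 0 => 1
  | t + 1 =>
    if t + 1 ≤ q then 2 ^ t
    else ∑ i ∈ Finset.range q, qbonacci q (t - i)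
  decreasing_by exact Nat.lt_succ_of_le (Nat.sub_le t i)

/-- The length-`t` word cycling through the alphabet `{0, 1, ..., q-1}`. -/
def cyc (q t : ℕ) : List ℕ := (List.range t).map (· % q)

/-- The alternating binary word `0,1,0,1,...` of length `t` (A=0, C=1). -/
def alt (t : ℕ) : List ℕ := (List.range t).map (· % 2)

/-- `tau q x` is the least `s` such that `x` is a subsequence of `cyc q s`. -/
noncomputable def tau (q : ℕ) (x : List ℕ) : ℕ := sInf {s | x <+ cyc q s}

/-! ### Auxiliary machinery -/

lemma repl_infix_iff {t : ℕ} (p : ℕ) (w : Fin t → Bool) :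
    List.replicate p false <:+: List.ofFn w ↔
      ∃ m, m + p ≤ t ∧ ∀ i : Fin t, m ≤ (i : ℕ) → (i : ℕ) < m + p → w i = false := by
  constructor
  · rintro ⟨s, u, h⟩
    have hl := congrArg List.length h
    simp only [List.length_append, List.length_replicate, List.length_ofFn] at hl
    refine ⟨s.length, by omega, ?_⟩
    intro i h1 h2
    have hi : (i : ℕ) < (s ++ List.replicate p false).length := by simp; omega
    have key : (s ++ List.replicate p false ++ u)[(i : ℕ)]'(by rw [h]; simp [i.2]) = w i := by
      simp only [h, List.getElem_ofFn]
    rw [List.getElem_append_left hi, List.getElem_append_right h1,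
      List.getElem_replicate] at key
    exact key.symm
  · rintro ⟨m, hm, hw⟩
    refine ⟨(List.ofFn w).take m, (List.ofFn w).drop (m + p), ?_⟩
    have key : ((List.ofFn w).drop m).take p = List.replicate p false := by
      rw [List.eq_replicate_iff]
      refine ⟨by simp; omega, ?_⟩
      intro b hb
      rw [List.mem_iff_getElem] at hb
      obtain ⟨j, hj, rfl⟩ := hb
      have hjp : j < p := by
        simp only [List.length_take, List.length_drop, List.length_ofFn] at hj; omega
      rw [List.getElem_take, List.getElem_drop, List.getElem_ofFn]
      exact hw _ (by simp) (by simp; omega)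
    calc (List.ofFn w).take m ++ List.replicate p false ++ (List.ofFn w).drop (m + p)
        = (List.ofFn w).take m ++
            (((List.ofFn w).drop m).take p ++ ((List.ofFn w).drop m).drop p) := by
          rw [key, List.drop_drop, List.append_assoc]
      _ = List.ofFn w := by rw [List.take_append_drop, List.take_append_drop]

/-- Number of length-`t` binary words avoiding `p` consecutive `false`s. -/
def cnt (p t : ℕ) : ℕ :=
  #(Finset.univ.filter fun w : Fin t → Bool => ¬ List.replicate p false <:+: List.ofFn w)

lemma cnt_small {p t : ℕ} (h : t < p) : cnt p t = 2 ^ t := by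
  rw [cnt, Finset.filter_true_of_mem, Finset.card_univ]
  · simp [Fintype.card_fun]
  · intro w _ hcon
    have := hcon.length_le
    simp only [List.length_replicate, List.length_ofFn] at this
    omega

/-- Insert `i` leading `false`s and a `true` before a word. -/
def ins (t i : ℕ) (hit : i < t) (w : Fin (t - 1 - i) → Bool) : Fin t → Bool :=
  fun j => if _h1 : (j : ℕ) < i then false
    else if _h2 : (j : ℕ) = i then true
    else w ⟨(j : ℕ) - i - 1, by omega⟩

lemma ins_lt {t i : ℕ} (hit : i < t) (w : Fin (t - 1 - i) → Bool) (j : Fin t)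
    (h : (j : ℕ) < i) : ins t i hit w j = false := by simp [ins, h]

lemma ins_self {t i : ℕ} (hit : i < t) (w : Fin (t - 1 - i) → Bool) (j : Fin t)
    (h : (j : ℕ) = i) : ins t i hit w j = true := by
  simp [ins, h]

lemma ins_gt {t i : ℕ} (hit : i < t) (w : Fin (t - 1 - i) → Bool) (j : Fin t)
    (h : i < (j : ℕ)) : ins t i hit w j = w ⟨(j : ℕ) - i - 1, by omega⟩ := by
  have h1 : ¬ (j : ℕ) < i := by omega
  have h2 : ¬ (j : ℕ) = i := by omega
  simp [ins, h1, h2]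

lemma ins_injective {t i : ℕ} (hit : i < t) : Function.Injective (ins t i hit) := by
  intro w w' h
  funext r
  have hr : i + 1 + (r : ℕ) < t := by omega
  have := congrFun h ⟨i + 1 + (r : ℕ), hr⟩
  rw [ins_gt hit w _ (by simp; omega), ins_gt hit w' _ (by simp; omega)] at this
  convert this using 2 <;> · ext; simp; omega

lemma ins_avoids {p t i : ℕ} (hip : i < p) (hpt : p ≤ t) (w : Fin (t - 1 - i) → Bool)
    (hw : ¬ List.replicate p false <:+: List.ofFn w) :
    ¬ List.replicate p false <:+: List.ofFn (ins t i (by omega) w) := by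
  rw [repl_infix_iff] at hw ⊢
  rintro ⟨m, hm, hf⟩
  rcases le_or_gt m i with hmi | hmi
  · have := hf ⟨i, by omega⟩ (by simpa) (by simp; omega)
    rw [ins_self _ w _ rfl] at this
    simp at this
  · apply hw
    refine ⟨m - i - 1, by omega, ?_⟩
    intro r h1 h2
    have hr : i + 1 + (r : ℕ) < t := by omega
    have := hf ⟨i + 1 + (r : ℕ), hr⟩ (by simp; omega) (by simp; omega)
    rw [ins_gt _ w _ (by simp; omega)] at this
    convert this using 2
    ext; simp; omega

lemma cnt_rec {p t : ℕ} (hp : 1 ≤ p) (hpt : p ≤ t) :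
    ∑ i ∈ Finset.range p, cnt p (t - 1 - i) ≤ cnt p t := by
  classical
  set s : Finset (Σ i : ℕ, (Fin (t - 1 - i) → Bool)) :=
    (Finset.range p).sigma (fun i =>
      Finset.univ.filter fun w : Fin (t - 1 - i) → Bool =>
        ¬ List.replicate p false <:+: List.ofFn w) with hs
  have hcard : #s = ∑ i ∈ Finset.range p, cnt p (t - 1 - i) := by
    rw [hs, Finset.card_sigma]
    rfl
  rw [← hcard, cnt]
  set Φ : (Σ i : ℕ, (Fin (t - 1 - i) → Bool)) → (Fin t → Bool) :=
    fun x => if h : x.1 < t then ins t x.1 h x.2 else (fun _ => true) with hΦ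
  apply Finset.card_le_card_of_injOn Φ
  · rintro ⟨i, w⟩ hmem
    simp only [Finset.mem_coe, hs] at hmem
    rw [Finset.mem_sigma, Finset.mem_range, Finset.mem_filter] at hmem
    obtain ⟨hip', _, hw⟩ := hmem
    have hip : i < p := hip'
    have hit : i < t := by omega
    rw [Finset.mem_coe, Finset.mem_filter]
    refine ⟨Finset.mem_univ _, ?_⟩
    have := ins_avoids hip hpt w hw
    simpa [hΦ, hit] using this
  · rintro ⟨i, w⟩ hmem ⟨i', w'⟩ hmem' heq
    simp only [hs, Finset.coe_sigma, Set.mem_sigma_iff, Finset.mem_coe, Finset.mem_range,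
      Finset.coe_range, Set.mem_Iio] at hmem hmem'
    have hit : i < t := by omega
    have hit' : i' < t := by omega
    simp only [hΦ, dif_pos hit, dif_pos hit'] at heq
    have hii : i = i' := by
      by_contra hne
      rcases lt_or_gt_of_ne hne with hlt | hlt
      · have := congrFun heq ⟨i, hit⟩
        rw [ins_self _ w _ rfl, ins_lt _ w' _ hlt] at this
        simp at this
      · have := congrFun heq ⟨i', hit'⟩
        rw [ins_self _ w' _ rfl, ins_lt _ w _ hlt] at this
        simp at this
    subst hii
    have : w = w' := ins_injective hit heq
    subst this
    rfl

lemma qb_le_cnt {p : ℕ} (hp : 1 ≤ p) : ∀ t, qbonacci p (t + 1) ≤ cnt p t := by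
  intro t
  induction t using Nat.strong_induction_on with
  | _ t ih =>
    rw [qbonacci]
    by_cases h : t + 1 ≤ p
    · rw [if_pos h, cnt_small (by omega)]
    · rw [if_neg h]
      push_neg at h
      refine le_trans (Finset.sum_le_sum ?_) (cnt_rec hp (by omega))
      intro i hi
      rw [Finset.mem_range] at hi
      have hti : t - i = (t - 1 - i) + 1 := by omega
      rw [hti]
      exact ih (t - 1 - i) (by omega)

/-- Number of majority-true words of length `n`. -/
def majCnt (n : ℕ) : ℕ :=
  #(Finset.univ.filter fun x : Fin n → Bool =>
      n < 2 * #(Finset.univ.filter fun k => x k = true))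

lemma trueCount_not (n : ℕ) (x : Fin n → Bool) :
    #(Finset.univ.filter fun k => (!x k) = true)
      = n - #(Finset.univ.filter fun k => x k = true) := by
  have h1 : #(Finset.univ.filter fun k => x k = true)
      + #(Finset.univ.filter fun k => ¬ x k = true) = n := by
    rw [Finset.card_filter_add_card_filter_not]
    simp
  have h2 : (Finset.univ.filter fun k : Fin n => (!x k) = true)
      = Finset.univ.filter fun k => ¬ x k = true := by
    apply Finset.filter_congr
    intro k _
    simp
  rw [h2]
  omega

lemma majCnt_double {n : ℕ} (hn : Odd n) : 2 * majCnt n = 2 ^ n := by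
  classical
  have hle : ∀ x : Fin n → Bool, #(Finset.univ.filter fun k => x k = true) ≤ n := by
    intro x
    simpa using Finset.card_filter_le Finset.univ (fun k : Fin n => x k = true)
  obtain ⟨c, hc⟩ := hn
  have key : majCnt n
      = #(Finset.univ.filter fun x : Fin n → Bool =>
          ¬ n < 2 * #(Finset.univ.filter fun k => x k = true)) := by
    rw [majCnt]
    apply Finset.card_bij' (fun x _ => fun k => !x k) (fun x _ => fun k => !x k)
    · intro x hx
      rw [Finset.mem_filter] at hx ⊢
      refine ⟨Finset.mem_univ _, ?_⟩
      rw [trueCount_not]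
      have := hx.2
      have := hle x
      omega
    · intro x hx
      rw [Finset.mem_filter] at hx ⊢
      refine ⟨Finset.mem_univ _, ?_⟩
      rw [trueCount_not]
      have h2 := hx.2
      have := hle x
      have hne : 2 * #(Finset.univ.filter fun k => x k = true) ≠ n := by omega
      omega
    · intro x _; funext k; simp
    · intro x _; funext k; simp
  have htot : majCnt n
      + #(Finset.univ.filter fun x : Fin n → Bool =>
          ¬ n < 2 * #(Finset.univ.filter fun k => x k = true)) = 2 ^ n := by
    rw [majCnt, Finset.card_filter_add_card_filter_not, Finset.card_univ]
    simp [Fintype.card_fun]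
  rw [two_mul]
  nth_rewrite 2 [key]
  exact htot

lemma card_forall_rows {X : Type*} [Fintype X] [DecidableEq X] (t : ℕ)
    (P : X → Prop) [DecidablePred P] :
    #(Finset.univ.filter fun Y : Fin t → X => ∀ s, P (Y s))
      = (#(Finset.univ.filter P)) ^ t := by
  classical
  calc #(Finset.univ.filter fun Y : Fin t → X => ∀ s, P (Y s))
      = Fintype.card {Y : Fin t → X // ∀ s, P (Y s)} := (Fintype.card_subtype _).symm
    _ = Fintype.card (Fin t → {x : X // P x}) :=
        Fintype.card_congr (Equiv.subtypePiEquivPi (p := fun _ : Fin t => P))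
    _ = Fintype.card {x : X // P x} ^ t := by
        rw [Fintype.card_fun, Fintype.card_fin]
    _ = (#(Finset.univ.filter P)) ^ t := by rw [Fintype.card_subtype]

lemma card_forall_cols {t n : ℕ} (Q : (Fin t → Bool) → Prop) [DecidablePred Q] :
    #(Finset.univ.filter fun Y : Fin t → Fin n → Bool => ∀ k, Q (fun s => Y s k))
      = (#(Finset.univ.filter Q)) ^ n := by
  classical
  rw [← card_forall_rows n Q]
  apply Finset.card_bij' (fun Y _ => fun k s => Y s k) (fun Z _ => fun s k => Z k s)
  · intro Y hY
    rw [Finset.mem_filter] at hY ⊢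
    exact ⟨Finset.mem_univ _, hY.2⟩
  · intro Z hZ
    rw [Finset.mem_filter] at hZ ⊢
    exact ⟨Finset.mem_univ _, hZ.2⟩
  · intro Y _; rfl
  · intro Z _; rfl

lemma aux_arith (n t : ℕ) (h : 1 ≤ n) : (n - 1) * t + t = t * n := by
  rw [Nat.sub_one_mul, Nat.mul_comm t n]
  have := Nat.le_mul_of_pos_left t h
  omega

/-- Transfer of counting from matrices to finsets of pairs. -/
lemma card_finset_filter {t n : ℕ} (C : (Fin t → Fin n → Bool) → Prop) [DecidablePred C] :
    #(Finset.univ.filter fun S : Finset (Fin t × Fin n) =>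
        C (fun s k => decide ((s, k) ∈ S)))
      = #(Finset.univ.filter C) := by
  classical
  apply Finset.card_bij' (fun S _ => fun s k => decide ((s, k) ∈ S))
    (fun Y _ => Finset.univ.filter fun x : Fin t × Fin n => Y x.1 x.2 = true)
  · intro S hS
    rw [Finset.mem_filter] at hS ⊢
    exact ⟨Finset.mem_univ _, hS.2⟩
  · intro Y hY
    rw [Finset.mem_filter] at hY ⊢
    refine ⟨Finset.mem_univ _, ?_⟩
    have hfix : (fun s k => decide ((s, k) ∈
        Finset.univ.filter fun x : Fin t × Fin n => Y x.1 x.2 = true)) = Y := by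
      funext s k
      simp
    rw [hfix]
    exact hY.2
  · intro S _
    ext x
    simp
  · intro Y _
    funext s k
    simp

theorem stmt16 (t n p : ℕ) (hn : Odd n) (hp : 1 ≤ p) :
    (qbonacci p (t + 1) : ℝ) ^ n / 2 ^ (t * n + t)
      ≤ ((Finset.univ.filter (fun Y : Fin t → Fin n → Bool =>
            (∀ k, ¬ List.replicate p false <:+: List.ofFn (fun s => Y s k)) ∧
            (∀ s, n < 2 * (Finset.univ.filter (fun k => Y s k = true)).card))).card : ℝ)
          / 2 ^ (t * n) := by
  classical
  have hn1 : 1 ≤ n := hn.pos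
  set 𝒜 : Finset (Finset (Fin t × Fin n)) :=
    Finset.univ.filter (fun S =>
      ∀ k, ¬ List.replicate p false <:+: List.ofFn (fun s => decide ((s, k) ∈ S))) with h𝒜
  set ℬ : Finset (Finset (Fin t × Fin n)) :=
    Finset.univ.filter (fun S =>
      ∀ s : Fin t, n < 2 * #(Finset.univ.filter fun k => decide ((s, k) ∈ S) = true)) with hℬ
  -- upper sets
  have hupA : IsUpperSet (↑𝒜 : Set (Finset (Fin t × Fin n))) := by
    intro S T hST hS
    rw [h𝒜, Finset.mem_coe, Finset.mem_filter] at hS ⊢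
    refine ⟨Finset.mem_univ _, ?_⟩
    intro k hcon
    apply hS.2 k
    rw [repl_infix_iff] at hcon ⊢
    obtain ⟨m, hm, hf⟩ := hcon
    refine ⟨m, hm, ?_⟩
    intro i h1 h2
    have := hf i h1 h2
    simp only [decide_eq_false_iff_not] at this ⊢
    exact fun hmem => this (hST hmem)
  have hupB : IsUpperSet (↑ℬ : Set (Finset (Fin t × Fin n))) := by
    intro S T hST hS
    rw [hℬ, Finset.mem_coe, Finset.mem_filter] at hS ⊢
    refine ⟨Finset.mem_univ _, ?_⟩
    intro s
    refine lt_of_lt_of_le (hS.2 s) ?_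
    apply Nat.mul_le_mul_left
    apply Finset.card_le_card
    intro k hk
    rw [Finset.mem_filter] at hk ⊢
    refine ⟨Finset.mem_univ _, ?_⟩
    have := hk.2
    simp only [decide_eq_true_eq] at this ⊢
    exact hST this
  -- Harris-Kleitman
  have harris := hupA.le_card_inter_finset hupB
  rw [Fintype.card_prod, Fintype.card_fin, Fintype.card_fin] at harris
  -- identify the cards
  have hAcard : #𝒜 = cnt p t ^ n := by
    rw [h𝒜]
    refine (card_finset_filter (fun Y : Fin t → Fin n → Bool =>
      ∀ k, ¬ List.replicate p false <:+: List.ofFn (fun s => Y s k))).trans ?_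
    exact card_forall_cols (fun w : Fin t → Bool => ¬ List.replicate p false <:+: List.ofFn w)
  have hBcard : #ℬ = majCnt n ^ t := by
    rw [hℬ]
    refine (card_finset_filter (fun Y : Fin t → Fin n → Bool =>
      ∀ s, n < 2 * #(Finset.univ.filter fun k => Y s k = true))).trans ?_
    exact card_forall_rows t (fun x : Fin n → Bool =>
      n < 2 * #(Finset.univ.filter fun k => x k = true))
  have hIcard : #(𝒜 ∩ ℬ)
      = #(Finset.univ.filter (fun Y : Fin t → Fin n → Bool =>
          (∀ k, ¬ List.replicate p false <:+: List.ofFn (fun s => Y s k)) ∧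
          (∀ s, n < 2 * #(Finset.univ.filter fun k => Y s k = true)))) := by
    rw [h𝒜, hℬ, ← Finset.filter_and]
    exact card_finset_filter (fun Y : Fin t → Fin n → Bool =>
      (∀ k, ¬ List.replicate p false <:+: List.ofFn (fun s => Y s k)) ∧
      (∀ s, n < 2 * #(Finset.univ.filter fun k => Y s k = true)))
  rw [hAcard, hBcard, hIcard] at harris
  -- numeric chain
  have hmaj : majCnt n = 2 ^ (n - 1) := by
    have h1 := majCnt_double hn
    have hnn : n - 1 + 1 = n := Nat.succ_pred_eq_of_pos hn1
    have h2 : (2:ℕ) ^ n = 2 * 2 ^ (n - 1) := by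
      calc (2:ℕ) ^ n = 2 ^ (n - 1 + 1) := by rw [hnn]
        _ = 2 * 2 ^ (n - 1) := pow_succ' 2 (n - 1)
    have h12 : 2 * majCnt n = 2 * 2 ^ (n - 1) := by rw [h1, h2]
    exact Nat.eq_of_mul_eq_mul_left (by norm_num) h12
  set N : ℕ := #(Finset.univ.filter (fun Y : Fin t → Fin n → Bool =>
      (∀ k, ¬ List.replicate p false <:+: List.ofFn (fun s => Y s k)) ∧
      (∀ s, n < 2 * #(Finset.univ.filter fun k => Y s k = true)))) with hN
  have key : qbonacci p (t + 1) ^ n * 2 ^ (t * n) ≤ N * 2 ^ (t * n + t) := by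
    have step1 : qbonacci p (t + 1) ^ n * 2 ^ ((n - 1) * t)
        ≤ cnt p t ^ n * majCnt n ^ t := by
      rw [hmaj, ← pow_mul]
      exact Nat.mul_le_mul_right _ (Nat.pow_le_pow_left (qb_le_cnt hp t) n)
    have step2 : qbonacci p (t + 1) ^ n * 2 ^ ((n - 1) * t) ≤ 2 ^ (t * n) * N :=
      le_trans step1 harris
    calc qbonacci p (t + 1) ^ n * 2 ^ (t * n)
        = (qbonacci p (t + 1) ^ n * 2 ^ ((n - 1) * t)) * 2 ^ t := by
          rw [mul_assoc, ← pow_add]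
          congr 2
          rw [aux_arith n t hn1]
      _ ≤ (2 ^ (t * n) * N) * 2 ^ t := Nat.mul_le_mul_right _ step2
      _ = N * 2 ^ (t * n + t) := by ring
  rw [div_le_div_iff₀ (by positivity) (by positivity)]
  exact_mod_cast key
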